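/- Let H be a real Hilbert space, A and B bounded self-adjoint nonnegative operators on H, and λ > 0. Then the range of I + λAB is closed in H. -/

import Mathlib

open ContinuousLinearMap

/-- Cauchy–Schwarz for the nonnegative form `⟪A x, y⟫`. -/
lemma pos_form_cauchy_schwarz
    {H : Type*} [NormedAddCommGroup H] [InnerProductSpace ℝ H] [CompleteSpace H]
    (A : H →L[ℝ] H) (hA : IsSelfAdjoint A)
    (hApos : ∀ u : H, 0 ≤ (inner ℝ (A u) u : ℝ)) (x y : H) :
    (inner ℝ (A x) y : ℝ) ^ 2 ≤ (inner ℝ (A x) x : ℝ) * (inner ℝ (A y) y : ℝ) := by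
  have hsymm := (isSelfAdjoint_iff_isSymmetric).mp hA
  have key : ∀ t : ℝ, 0 ≤ (inner ℝ (A y) y : ℝ) * (t * t)
      + (2 * (inner ℝ (A x) y : ℝ)) * t + (inner ℝ (A x) x : ℝ) := by
    intro t
    have h0 := hApos (x + t • y)
    have expand : (inner ℝ (A (x + t • y)) (x + t • y) : ℝ)
        = (inner ℝ (A y) y : ℝ) * (t * t)
          + (2 * (inner ℝ (A x) y : ℝ)) * t + (inner ℝ (A x) x : ℝ) := by
      have hyx : (inner ℝ (A y) x : ℝ) = (inner ℝ (A x) y : ℝ) := by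
        rw [real_inner_comm]; exact (hsymm x y).symm
      simp only [map_add, map_smul, inner_add_add_self, inner_add_left,
        inner_add_right, inner_smul_left, inner_smul_right, RCLike.ofReal_real_eq_id, id_eq,
        conj_trivial]
      rw [hyx]; ring
    linarith [expand ▸ h0]
  have hd := discrim_le_zero key
  rw [discrim] at hd
  nlinarith [hd]

/-- Norm bound: `‖A w‖ ^ 2 ≤ ‖A‖ * ⟪A w, w⟫` for nonnegative self-adjoint `A`. -/
lemma pos_norm_sq_le
    {H : Type*} [NormedAddCommGroup H] [InnerProductSpace ℝ H] [CompleteSpace H]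
    (A : H →L[ℝ] H) (hA : IsSelfAdjoint A)
    (hApos : ∀ u : H, 0 ≤ (inner ℝ (A u) u : ℝ)) (w : H) :
    ‖A w‖ ^ 2 ≤ ‖A‖ * (inner ℝ (A w) w : ℝ) := by
  have cs := pos_form_cauchy_schwarz A hA hApos w (A w)
  have h1 : (inner ℝ (A w) (A w) : ℝ) = ‖A w‖ ^ 2 := real_inner_self_eq_norm_sq _
  have h2 : (inner ℝ (A (A w)) (A w) : ℝ) ≤ ‖A‖ * ‖A w‖ ^ 2 := by
    calc (inner ℝ (A (A w)) (A w) : ℝ) ≤ ‖A (A w)‖ * ‖A w‖ := real_inner_le_norm _ _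
      _ ≤ (‖A‖ * ‖A w‖) * ‖A w‖ := by
          have := A.le_opNorm (A w)
          nlinarith [norm_nonneg (A w)]
      _ = ‖A‖ * ‖A w‖ ^ 2 := by ring
  rw [h1] at cs
  rcases eq_or_lt_of_le (norm_nonneg (A w)) with h | h
  · rw [← h]
    have := mul_nonneg (norm_nonneg A) (hApos w)
    nlinarith
  · have hAw2 : 0 < ‖A w‖ ^ 2 := by positivity
    have hApw := hApos w
    nlinarith [cs, h2]

theorem range_id_add_smul_AB_closed
    {H : Type*} [NormedAddCommGroup H] [InnerProductSpace ℝ H] [CompleteSpace H]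
    (A B : H →L[ℝ] H) (hA : IsSelfAdjoint A) (hB : IsSelfAdjoint B)
    (hApos : ∀ u : H, 0 ≤ (inner ℝ (A u) u : ℝ))
    (hBpos : ∀ u : H, 0 ≤ (inner ℝ (B u) u : ℝ))
    (l : ℝ) (hl : 0 < l) :
    IsClosed (Set.range fun u : H => u + l • A (B u)) := by
  set T : H →L[ℝ] H := ContinuousLinearMap.id ℝ H + l • (A.comp B) with hT
  have hTapp : ∀ u : H, T u = u + l • A (B u) := by
    intro u; simp [hT]
  -- key bound : ‖w‖ ≤ (2 + l * ‖A‖ * ‖B‖) * ‖T w‖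
  have key : ∀ w : H, ‖w‖ ≤ (2 + l * ‖A‖ * ‖B‖) * ‖T w‖ := by
    intro w
    set g : H := T w with hg
    have hgw : g = w + l • A (B w) := hTapp w
    -- pairing with B w
    have pair : (inner ℝ g (B w) : ℝ)
        = (inner ℝ w (B w) : ℝ) + l * (inner ℝ (A (B w)) (B w) : ℝ) := by
      rw [hgw, inner_add_left, real_inner_smul_left]
    have hwBw : 0 ≤ (inner ℝ w (B w) : ℝ) := by
      rw [real_inner_comm]; exact hBpos w
    have hABw : 0 ≤ (inner ℝ (A (B w)) (B w) : ℝ) := hApos (B w)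
    have hpairle : (inner ℝ g (B w) : ℝ) ≤ ‖g‖ * (‖B‖ * ‖w‖) := by
      calc (inner ℝ g (B w) : ℝ) ≤ ‖g‖ * ‖B w‖ := real_inner_le_norm _ _
        _ ≤ ‖g‖ * (‖B‖ * ‖w‖) := by
            have := B.le_opNorm w
            nlinarith [norm_nonneg g]
    have step2 : l * (inner ℝ (A (B w)) (B w) : ℝ) ≤ ‖g‖ * (‖B‖ * ‖w‖) := by
      linarith [pair ▸ hpairle]
    -- ‖A (B w)‖² bound
    have step3 : ‖A (B w)‖ ^ 2 ≤ ‖A‖ * (inner ℝ (A (B w)) (B w) : ℝ) :=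
      pos_norm_sq_le A hA hApos (B w)
    -- ‖w‖ ≤ ‖g‖ + l * ‖A (B w)‖
    have step4 : ‖w‖ ≤ ‖g‖ + l * ‖A (B w)‖ := by
      have : w = g - l • A (B w) := by rw [hgw]; abel
      calc ‖w‖ = ‖g - l • A (B w)‖ := by rw [← this]
        _ ≤ ‖g‖ + ‖l • A (B w)‖ := norm_sub_le _ _
        _ = ‖g‖ + l * ‖A (B w)‖ := by
            rw [norm_smul, Real.norm_eq_abs, abs_of_pos hl]
    -- (l * ‖A (B w)‖)^2 ≤ ‖w‖ * (l * ‖A‖ * ‖B‖ * ‖g‖)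
    have step5 : (l * ‖A (B w)‖) ^ 2 ≤ ‖w‖ * (l * ‖A‖ * ‖B‖ * ‖g‖) := by
      have hAnn : 0 ≤ ‖A‖ := norm_nonneg (A : H →L[ℝ] H)
      have h1 : l ^ 2 * ‖A (B w)‖ ^ 2 ≤ l ^ 2 * (‖A‖ * (inner ℝ (A (B w)) (B w) : ℝ)) :=
        mul_le_mul_of_nonneg_left step3 (sq_nonneg l)
      have h2 : (l * ‖A‖) * (l * (inner ℝ (A (B w)) (B w) : ℝ))
          ≤ (l * ‖A‖) * (‖g‖ * (‖B‖ * ‖w‖)) :=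
        mul_le_mul_of_nonneg_left step2 (by positivity)
      calc (l * ‖A (B w)‖) ^ 2 = l ^ 2 * ‖A (B w)‖ ^ 2 := by ring
        _ ≤ l ^ 2 * (‖A‖ * (inner ℝ (A (B w)) (B w) : ℝ)) := h1
        _ = (l * ‖A‖) * (l * (inner ℝ (A (B w)) (B w) : ℝ)) := by ring
        _ ≤ (l * ‖A‖) * (‖g‖ * (‖B‖ * ‖w‖)) := h2
        _ = ‖w‖ * (l * ‖A‖ * ‖B‖ * ‖g‖) := by ring
    -- AM-GM : l * ‖A (B w)‖ ≤ (‖w‖ + l * ‖A‖ * ‖B‖ * ‖g‖) / 2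
    have step6 : l * ‖A (B w)‖ ≤ (‖w‖ + l * ‖A‖ * ‖B‖ * ‖g‖) / 2 := by
      have hnn : 0 ≤ l * ‖A (B w)‖ := by positivity
      have hm : 0 ≤ (‖w‖ + l * ‖A‖ * ‖B‖ * ‖g‖) / 2 := by positivity
      have hsq : (l * ‖A (B w)‖) ^ 2 ≤ ((‖w‖ + l * ‖A‖ * ‖B‖ * ‖g‖) / 2) ^ 2 := by
        nlinarith [sq_nonneg (‖w‖ - l * ‖A‖ * ‖B‖ * ‖g‖), step5]
      exact (pow_le_pow_iff_left₀ hnn hm two_ne_zero).mp hsq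
    nlinarith [step4, step6, norm_nonneg g]
  -- conclude with antilipschitz
  have hK : (0:ℝ) ≤ 2 + l * ‖A‖ * ‖B‖ := by positivity
  have hanti : AntilipschitzWith (2 + l * ‖A‖ * ‖B‖).toNNReal T := by
    apply T.antilipschitz_of_bound
    intro x
    simpa [Real.coe_toNNReal _ hK] using key x
  have : (Set.range fun u : H => u + l • A (B u)) = Set.range T := by
    ext x; constructor
    · rintro ⟨u, rfl⟩; exact ⟨u, (hTapp u).symm⟩
    · rintro ⟨u, rfl⟩; exact ⟨u, (hTapp u)⟩
  rw [this]
  exact hanti.isClosed_range T.uniformContinuous
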